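/- (Non-minimal realization.) Let A ∈ ℝ^{n×n}, B ∈ ℝ^{n×m}, C ∈ ℝ^{p×n}, and let u, x, y satisfy x(t+1) = A·x(t) + B·u(t) and y(t) = C·x(t) for all t. Fix L ≥ 1, suppose 𝒪_Lᵀ𝒪_L is invertible, set 𝒪_L† = (𝒪_Lᵀ𝒪_L)⁻¹𝒪_Lᵀ and S = [C·(𝒞_L − A^L·𝒪_L†·𝒯_L), C·A^L·𝒪_L†]. Then for every t ≥ L the non-minimal state ξ_t = (u_{t,L}, y_{t,L}) ∈ ℝ^{mL+pL} satisfies ξ_{t+1} = 𝔸·ξ_t + 𝔹·u(t) and y(t) = S·ξ_t, where 𝔸 ∈ ℝ^{(mL+pL)×(mL+pL)} is the block matrix whose first mL rows shift the input block down by one m-block (block row i equals I_m placed in block column i−1 for 2 ≤ i ≤ L, and block row 1 is zero), whose block row L+1 (of height p) equals S, and whose remaining y-block rows shift the output block down by one p-block (block row L+j equals I_p placed in block column L+j−1 for 2 ≤ j ≤ L); and 𝔹 ∈ ℝ^{(mL+pL)×m} has I_m as its top m×m block and zeros elsewhere. -/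

import Mathlib

open Matrix Finset

/-- Extended observability matrix `𝒪_L = [C A^{L−1}; …; C A; C]`
(block row `i` is `C * A ^ (L - 1 - i)`). -/
def obsMat (n p L : ℕ) (A : Matrix (Fin n) (Fin n) ℝ) (C : Matrix (Fin p) (Fin n) ℝ) :
    Matrix (Fin L × Fin p) (Fin n) ℝ :=
  fun ia j => (C * A ^ (L - 1 - (ia.1 : ℕ))) ia.2 j

/-- Controllability matrix `𝒞_L = [B, A B, …, A^{L−1} B]`. -/
def ctrbMat (n m L : ℕ) (A : Matrix (Fin n) (Fin n) ℝ) (B : Matrix (Fin n) (Fin m) ℝ) :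
    Matrix (Fin n) (Fin L × Fin m) ℝ :=
  fun i jb => (A ^ (jb.1 : ℕ) * B) i jb.2

/-- Impulse-response Toeplitz matrix `𝒯_L`: block `(i,j)` equals `C A^{j−i−1} B` if `j > i`
and `0` otherwise (`0`-indexed blocks). -/
def toepMat (n m p L : ℕ) (A : Matrix (Fin n) (Fin n) ℝ) (B : Matrix (Fin n) (Fin m) ℝ)
    (C : Matrix (Fin p) (Fin n) ℝ) :
    Matrix (Fin L × Fin p) (Fin L × Fin m) ℝ :=
  fun ia jb =>
    if (ia.1 : ℕ) < (jb.1 : ℕ) then (C * A ^ ((jb.1 : ℕ) - (ia.1 : ℕ) - 1) * B) ia.2 jb.2 else 0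

/-- Stacked past inputs `u_{t,L} = (u(t−1), …, u(t−L))`, most recent first. -/
def uStack (m L : ℕ) (u : ℕ → Fin m → ℝ) (t : ℕ) : Fin L × Fin m → ℝ :=
  fun jb => u (t - 1 - (jb.1 : ℕ)) jb.2

/-- Stacked past outputs `y_{t,L} = (y(t−1), …, y(t−L))`, most recent first. -/
def yStack (p L : ℕ) (y : ℕ → Fin p → ℝ) (t : ℕ) : Fin L × Fin p → ℝ :=
  fun jc => y (t - 1 - (jc.1 : ℕ)) jc.2


/-- The matrix `S = [C(𝒞_L − A^L 𝒪_L† 𝒯_L), C A^L 𝒪_L†]`. -/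
noncomputable def Smat (n m p L : ℕ) (A : Matrix (Fin n) (Fin n) ℝ) (B : Matrix (Fin n) (Fin m) ℝ)
    (C : Matrix (Fin p) (Fin n) ℝ) :
    Matrix (Fin p) ((Fin L × Fin m) ⊕ (Fin L × Fin p)) ℝ :=
  Matrix.fromCols
    (C * (ctrbMat n m L A B -
      A ^ L * (((obsMat n p L A C)ᵀ * obsMat n p L A C)⁻¹ * (obsMat n p L A C)ᵀ) *
        toepMat n m p L A B C))
    (C * A ^ L * (((obsMat n p L A C)ᵀ * obsMat n p L A C)⁻¹ * (obsMat n p L A C)ᵀ))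

/-- The non-minimal state `ξ_t = (u_{t,L}, y_{t,L})`. -/
def xiState (m p L : ℕ) (u : ℕ → Fin m → ℝ) (y : ℕ → Fin p → ℝ) (t : ℕ) :
    (Fin L × Fin m) ⊕ (Fin L × Fin p) → ℝ :=
  Sum.elim (uStack m L u t) (yStack p L y t)

/-- The state matrix `𝔸` of the non-minimal realization: the input block rows shift the
stacked inputs down by one `m`-block (block row `0` is zero), block row `L+1`
(the first output block row) equals `S`, and the remaining output block rows shift the
stacked outputs down by one `p`-block. -/
noncomputable def AmatNM (n m p L : ℕ) (A : Matrix (Fin n) (Fin n) ℝ)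
    (B : Matrix (Fin n) (Fin m) ℝ) (C : Matrix (Fin p) (Fin n) ℝ) :
    Matrix ((Fin L × Fin m) ⊕ (Fin L × Fin p)) ((Fin L × Fin m) ⊕ (Fin L × Fin p)) ℝ :=
  fun r c =>
    match r with
    | Sum.inl ia =>
        match c with
        | Sum.inl jb => if (ia.1 : ℕ) = (jb.1 : ℕ) + 1 ∧ ia.2 = jb.2 then 1 else 0
        | Sum.inr _ => 0
    | Sum.inr ic =>
        if (ic.1 : ℕ) = 0 then Smat n m p L A B C ic.2 c
        else
          match c with
          | Sum.inl _ => 0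
          | Sum.inr jd => if (ic.1 : ℕ) = (jd.1 : ℕ) + 1 ∧ ic.2 = jd.2 then 1 else 0

/-- The input matrix `𝔹` of the non-minimal realization: `I_m` on top, zeros below. -/
def BmatNM (m p L : ℕ) :
    Matrix ((Fin L × Fin m) ⊕ (Fin L × Fin p)) (Fin m) ℝ :=
  fun r b =>
    match r with
    | Sum.inl ia => if (ia.1 : ℕ) = 0 ∧ ia.2 = b then 1 else 0
    | Sum.inr _ => 0

private lemma mulVec_sum' {n m : ℕ} {ι : Type*} (s : Finset ι) (A : Matrix (Fin n) (Fin m) ℝ)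
    (v : ι → Fin m → ℝ) : A.mulVec (∑ i ∈ s, v i) = ∑ i ∈ s, A.mulVec (v i) := by
  funext j
  simp only [Matrix.mulVec, dotProduct, Finset.sum_apply, Finset.mul_sum]
  exact Finset.sum_comm

private lemma state_sol {n m : ℕ} (A : Matrix (Fin n) (Fin n) ℝ) (B : Matrix (Fin n) (Fin m) ℝ)
    (u : ℕ → Fin m → ℝ) (x : ℕ → Fin n → ℝ)
    (hdyn : ∀ t, x (t+1) = A.mulVec (x t) + B.mulVec (u t)) :
    ∀ s k, x (s + k) = (A ^ k).mulVec (x s) +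
      ∑ i ∈ Finset.range k, ((A ^ i) * B).mulVec (u (s + k - 1 - i)) := by
  intro s k
  induction k with
  | zero => simp [Matrix.one_mulVec]
  | succ k ih =>
    rw [show s + (k+1) = (s+k)+1 from rfl, hdyn, ih, Matrix.mulVec_add]
    rw [Finset.sum_range_succ']
    have h1 : A.mulVec ((A ^ k).mulVec (x s)) = (A ^ (k+1)).mulVec (x s) := by
      rw [Matrix.mulVec_mulVec, pow_succ']
    have h2 : A.mulVec (∑ i ∈ Finset.range k, ((A ^ i) * B).mulVec (u (s + k - 1 - i)))
        = ∑ i ∈ Finset.range k, ((A ^ (i+1)) * B).mulVec (u (s + k - 1 - i)) := by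
      rw [mulVec_sum']
      refine Finset.sum_congr rfl fun i hi => ?_
      rw [Matrix.mulVec_mulVec, ← Matrix.mul_assoc, ← pow_succ']
    have e1 : s + k + 1 - 1 - 0 = s + k := by omega
    have e2 : ∀ i : ℕ, s + k + 1 - 1 - (i+1) = s + k - 1 - i := fun i => by omega
    simp only [e2, e1, pow_zero, Matrix.one_mul]
    rw [h1, h2]
    abel

private lemma ctrb_mulVec (n m L : ℕ) (A : Matrix (Fin n) (Fin n) ℝ)
    (B : Matrix (Fin n) (Fin m) ℝ) (u : ℕ → Fin m → ℝ) (t : ℕ) :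
    (ctrbMat n m L A B).mulVec (uStack m L u t)
      = ∑ i ∈ Finset.range L, ((A ^ i) * B).mulVec (u (t - 1 - i)) := by
  funext j
  rw [Finset.sum_apply, ← Fin.sum_univ_eq_sum_range]
  simp [Matrix.mulVec, dotProduct, ctrbMat, uStack, Fintype.sum_prod_type]

private lemma stack_output (n m p L : ℕ) (A : Matrix (Fin n) (Fin n) ℝ)
    (B : Matrix (Fin n) (Fin m) ℝ) (C : Matrix (Fin p) (Fin n) ℝ)
    (u : ℕ → Fin m → ℝ) (x : ℕ → Fin n → ℝ) (y : ℕ → Fin p → ℝ)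
    (hdyn : ∀ t, x (t+1) = A.mulVec (x t) + B.mulVec (u t))
    (hout : ∀ t, y t = C.mulVec (x t)) (t : ℕ) (ht : L ≤ t) :
    yStack p L y t = (obsMat n p L A C).mulVec (x (t - L)) +
      (toepMat n m p L A B C).mulVec (uStack m L u t) := by
  funext ia
  obtain ⟨i, a⟩ := ia
  have hi : (i : ℕ) < L := i.isLt
  set k := L - 1 - (i : ℕ) with hk
  have h1 : t - 1 - (i : ℕ) = (t - L) + k := by omega
  have lhs : yStack p L y t (i, a) = C.mulVec (x ((t - L) + k)) a := by
    simp [yStack, hout, h1]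
  rw [Pi.add_apply, lhs, state_sol A B u x hdyn, Matrix.mulVec_add, Pi.add_apply]
  congr 1
  · rw [Matrix.mulVec_mulVec]
    simp [obsMat, Matrix.mulVec, dotProduct, ← hk]
  · have toepsum : (toepMat n m p L A B C).mulVec (uStack m L u t) (i, a)
        = ∑ j ∈ Finset.range k, ((C * A ^ j * B).mulVec (u (t - L + k - 1 - j))) a := by
      have step1 : (toepMat n m p L A B C).mulVec (uStack m L u t) (i, a)
          = ∑ j1 ∈ Finset.range L,
              (if (i : ℕ) < j1 then ((C * A ^ (j1 - (i : ℕ) - 1) * B).mulVec (u (t - 1 - j1))) a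
               else 0) := by
        rw [← Fin.sum_univ_eq_sum_range]
        simp only [Matrix.mulVec, dotProduct, Fintype.sum_prod_type]
        refine Finset.sum_congr rfl fun j1 _ => ?_
        by_cases h : (i : ℕ) < (j1 : ℕ)
        · simp [toepMat, uStack, h]
        · simp [toepMat, uStack, h]
      rw [step1, Finset.range_eq_Ico,
        ← Finset.sum_Ico_consecutive _ (Nat.zero_le ((i : ℕ) + 1)) (by omega : (i : ℕ) + 1 ≤ L)]
      have z : ∑ j1 ∈ Finset.Ico 0 ((i : ℕ) + 1),
          (if (i : ℕ) < j1 then ((C * A ^ (j1 - (i : ℕ) - 1) * B).mulVec (u (t - 1 - j1))) a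
           else 0) = 0 := by
        refine Finset.sum_eq_zero fun j hj => ?_
        rw [if_neg]
        simp only [Finset.mem_Ico] at hj
        omega
      rw [z, zero_add, Finset.sum_Ico_eq_sum_range]
      rw [show L - ((i : ℕ) + 1) = k from by omega]
      refine Finset.sum_congr rfl fun j hj => ?_
      simp only [Finset.mem_range] at hj
      rw [if_pos (by omega)]
      rw [show (i : ℕ) + 1 + j - (i : ℕ) - 1 = j from by omega,
        show t - 1 - ((i : ℕ) + 1 + j) = t - L + k - 1 - j from by omega]
    rw [toepsum, mulVec_sum', Finset.sum_apply]
    refine Finset.sum_congr rfl fun j hj => ?_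
    rw [Matrix.mulVec_mulVec, ← Matrix.mul_assoc]

private lemma output_formula (n m p L : ℕ) (hL : 1 ≤ L)
    (A : Matrix (Fin n) (Fin n) ℝ) (B : Matrix (Fin n) (Fin m) ℝ)
    (C : Matrix (Fin p) (Fin n) ℝ)
    (u : ℕ → Fin m → ℝ) (x : ℕ → Fin n → ℝ) (y : ℕ → Fin p → ℝ)
    (hdyn : ∀ t : ℕ, x (t + 1) = A.mulVec (x t) + B.mulVec (u t))
    (hout : ∀ t : ℕ, y t = C.mulVec (x t))
    (hObs : IsUnit ((obsMat n p L A C)ᵀ * obsMat n p L A C))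
    (t : ℕ) (ht : L ≤ t) :
    y t = (Smat n m p L A B C).mulVec (xiState m p L u y t) := by
  set O := obsMat n p L A C with hO
  set P := ((Oᵀ * O)⁻¹ * Oᵀ) with hP
  set T := toepMat n m p L A B C with hT
  set Cc := ctrbMat n m L A B with hCc
  set uS := uStack m L u t with huS
  set yS := yStack p L y t with hyS
  have hPO : P * O = 1 := by
    rw [hP, Matrix.mul_assoc, Matrix.nonsing_inv_mul _ ((Matrix.isUnit_iff_isUnit_det _).mp hObs)]
  have hx : x t = (A ^ L).mulVec (x (t - L)) + Cc.mulVec uS := by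
    have h := state_sol A B u x hdyn (t - L) L
    rw [Nat.sub_add_cancel ht] at h
    rw [h, hCc, huS, ctrb_mulVec]
  have hy : yS = O.mulVec (x (t - L)) + T.mulVec uS :=
    stack_output n m p L A B C u x y hdyn hout t ht
  have hxs : x (t - L) = P.mulVec yS - P.mulVec (T.mulVec uS) := by
    rw [hy, Matrix.mulVec_add, Matrix.mulVec_mulVec, hPO, Matrix.one_mulVec]
    abel
  show y t = (Smat n m p L A B C).mulVec (Sum.elim uS yS)
  rw [Smat, Matrix.fromCols_mulVec_sumElim, hout t, hx]
  rw [Matrix.mulVec_add, Matrix.mulVec_mulVec, hxs]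
  simp only [← hO, ← hP, ← hT, ← hCc, Matrix.sub_mulVec, Matrix.mulVec_sub,
    ← Matrix.mulVec_mulVec, Matrix.mul_assoc]
  abel
private lemma sum_pick {q L : ℕ} (k : ℕ) (hkL : k < L) (g : Fin L → Fin q → ℝ) (c : Fin q) :
    ∑ j1 : Fin L, ∑ j2 : Fin q, (if k + 1 = (j1 : ℕ) + 1 ∧ c = j2 then (1:ℝ) else 0) * g j1 j2
      = g ⟨k, hkL⟩ c := by
  rw [Finset.sum_eq_single (⟨k, hkL⟩ : Fin L)]
  · simp
  · intro j1 _ hne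
    refine Finset.sum_eq_zero fun j2 _ => ?_
    rw [if_neg, zero_mul]
    rintro ⟨h1, h2⟩
    refine hne (Fin.ext ?_)
    show (j1 : ℕ) = k
    omega
  · simp
theorem nonminimal_realization
    (n m p L : ℕ) (hL : 1 ≤ L)
    (A : Matrix (Fin n) (Fin n) ℝ) (B : Matrix (Fin n) (Fin m) ℝ)
    (C : Matrix (Fin p) (Fin n) ℝ)
    (u : ℕ → Fin m → ℝ) (x : ℕ → Fin n → ℝ) (y : ℕ → Fin p → ℝ)
    (hdyn : ∀ t : ℕ, x (t + 1) = A.mulVec (x t) + B.mulVec (u t))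
    (hout : ∀ t : ℕ, y t = C.mulVec (x t))
    (hObs : IsUnit ((obsMat n p L A C)ᵀ * obsMat n p L A C)) :
    ∀ t : ℕ, L ≤ t →
      xiState m p L u y (t + 1) =
          (AmatNM n m p L A B C).mulVec (xiState m p L u y t) +
            (BmatNM m p L).mulVec (u t) ∧
        y t = (Smat n m p L A B C).mulVec (xiState m p L u y t) := by
  intro t ht
  have key := output_formula n m p L hL A B C u x y hdyn hout hObs
  refine ⟨?_, key t ht⟩
  funext r
  rw [Pi.add_apply]
  rcases r with ⟨i, b⟩ | ⟨i, c⟩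
  · -- input rows
    simp only [xiState, Sum.elim_inl, Sum.elim_inr, uStack, yStack, Matrix.mulVec, dotProduct,
      Fintype.sum_sum_type, Fintype.sum_prod_type, AmatNM, BmatNM,
      zero_mul, Finset.sum_const_zero, add_zero]
    rcases hiv : (i : ℕ) with _ | k
    · simp [hiv, Finset.sum_ite_eq]
    · have hkL : k < L := by have := i.isLt; omega
      simp only [hiv, Nat.succ_ne_zero, false_and, if_false, zero_mul,
        Finset.sum_const_zero, add_zero]
      rw [sum_pick k hkL (fun j1 j2 => u (t - 1 - (j1 : ℕ)) j2) b]
      rw [show t + 1 - 1 - (k + 1) = t - 1 - k from by omega]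
  · -- output rows
    have hB : (BmatNM m p L).mulVec (u t) (Sum.inr (i, c)) = 0 := by
      simp [BmatNM, Matrix.mulVec, dotProduct]
    rw [hB, add_zero]
    rcases hiv : (i : ℕ) with _ | k
    · have hA : (AmatNM n m p L A B C).mulVec (xiState m p L u y t) (Sum.inr (i, c))
          = (Smat n m p L A B C).mulVec (xiState m p L u y t) c := by
        simp only [Matrix.mulVec, dotProduct]
        refine Finset.sum_congr rfl fun j _ => ?_
        simp [AmatNM, hiv]
      rw [hA, ← key t ht]
      simp [xiState, yStack, hiv]
    · have hkL : k < L := by have := i.isLt; omega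
      simp only [xiState, Sum.elim_inl, Sum.elim_inr, uStack, yStack, Matrix.mulVec, dotProduct,
        Fintype.sum_sum_type, Fintype.sum_prod_type, AmatNM, hiv, Nat.succ_ne_zero,
        if_false, zero_mul, Finset.sum_const_zero, zero_add, add_zero]
      rw [sum_pick k hkL (fun j1 j2 => y (t - 1 - (j1 : ℕ)) j2) c]
      rw [show t + 1 - 1 - (k + 1) = t - 1 - k from by omega]
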